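/- arXiv:2003.09345 — 2 statements merged into one kernel-verified Lean document; each statement's English description precedes it below -/
import Mathlib

section
/- Let 0 < λ < 1, let Δ, γ : ℝ → ℝ be C¹ functions with Δ(0) = λ and γ(0) = ξ∞ ≠ 0, and let (ηₙ)_{n≥1} be a sequence of real numbers with ηₙ → 0 satisfying ηₙ = Δ(γ(ηₙ)·ηₙ)ⁿ · γ(ηₙ) for every n ≥ 1. Then there exist a constant C > 0 and an index n₀ such that for all n ≥ n₀: |γ(ηₙ) − ξ∞| ≤ C·λⁿ and |ηₙ − ξ∞·λⁿ| ≤ C·n·λ^{2n}. -/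
private lemma aux_pow_sub (m : ℝ) :
    ∀ (n : ℕ) (a b : ℝ), |a| ≤ m → |b| ≤ m →
      |a ^ (n + 1) - b ^ (n + 1)| ≤ (n + 1 : ℝ) * m ^ n * |a - b| := by
  intro n
  induction n with
  | zero => intro a b _ _; simp
  | succ k ih =>
    intro a b ha hb
    have hm : 0 ≤ m := (abs_nonneg a).trans ha
    have key : a ^ (k + 2) - b ^ (k + 2)
        = a * (a ^ (k + 1) - b ^ (k + 1)) + b ^ (k + 1) * (a - b) := by ring
    calc |a ^ (k + 2) - b ^ (k + 2)|
        ≤ |a| * |a ^ (k + 1) - b ^ (k + 1)| + |b| ^ (k + 1) * |a - b| := by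
          rw [key]
          exact (abs_add_le _ _).trans (by rw [abs_mul, abs_mul, abs_pow])
      _ ≤ m * ((k + 1 : ℝ) * m ^ k * |a - b|) + m ^ (k + 1) * |a - b| := by
          refine add_le_add (mul_le_mul ha (ih a b ha hb) (abs_nonneg _) hm)
            (mul_le_mul_of_nonneg_right (pow_le_pow_left₀ (abs_nonneg b) hb _) (abs_nonneg _))
      _ = ((k + 1 : ℕ) + 1 : ℝ) * m ^ (k + 1) * |a - b| := by push_cast; ring

private lemma aux_exp_bound (lam a : ℝ) (hlam : 0 < lam) (ha : 0 ≤ a) (n : ℕ) :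
    (lam + a) ^ n ≤ lam ^ n * Real.exp (n * (a / lam)) := by
  have h1 : lam + a = lam * (1 + a / lam) := by field_simp
  rw [h1, mul_pow]
  refine mul_le_mul_of_nonneg_left ?_ (pow_nonneg hlam.le n)
  have h2 : 1 + a / lam ≤ Real.exp (a / lam) := by
    have := Real.add_one_le_exp (a / lam); linarith
  calc (1 + a / lam) ^ n ≤ Real.exp (a / lam) ^ n :=
        pow_le_pow_left₀ (by positivity) h2 n
    _ = Real.exp (n * (a / lam)) := by rw [← Real.exp_nat_mul]

set_option maxHeartbeats 2000000 in
/-- Asymptotics of the solutions `ηₙ` of the implicit system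
`ηₙ = Δ(γ(ηₙ)ηₙ)ⁿ·γ(ηₙ)`: one has `γ(ηₙ) = xiInf + O(λⁿ)` and
`ηₙ = xiInfλⁿ + O(nλ²ⁿ)`. -/
theorem homoclinic_periodic_asymptotics (lam xiInf : ℝ) (hlam0 : 0 < lam)
    (hlam1 : lam < 1) (hxiInf : xiInf ≠ 0)
    (Δ γ : ℝ → ℝ) (hΔ : ContDiff ℝ 1 Δ) (hγ : ContDiff ℝ 1 γ)
    (hΔ0 : Δ 0 = lam) (hγ0 : γ 0 = xiInf)
    (η : ℕ → ℝ) (hηlim : Filter.Tendsto η Filter.atTop (nhds 0))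
    (hηeq : ∀ n : ℕ, 1 ≤ n → η n = Δ (γ (η n) * η n) ^ n * γ (η n)) :
    ∃ C : ℝ, 0 < C ∧ ∃ n₀ : ℕ, ∀ n : ℕ, n₀ ≤ n →
      |γ (η n) - xiInf| ≤ C * lam ^ n ∧
      |η n - xiInf * lam ^ n| ≤ C * n * lam ^ (2 * n) := by
  -- Lipschitz bounds near 0
  obtain ⟨Kγ, tγ, htγ, hlipγ⟩ := (hγ.contDiffAt (x := 0)).exists_lipschitzOnWith
  obtain ⟨KΔ, tΔ, htΔ, hlipΔ⟩ := (hΔ.contDiffAt (x := 0)).exists_lipschitzOnWith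
  obtain ⟨δγ, hδγ0, hδγ⟩ := Metric.mem_nhds_iff.mp htγ
  obtain ⟨δΔ, hδΔ0, hδΔ⟩ := Metric.mem_nhds_iff.mp htΔ
  set L : ℝ := (max Kγ KΔ : NNReal) + 1 with hLdef
  have hL0 : 0 < L := by positivity
  set δ : ℝ := min (δγ / 2) (δΔ / 2) with hδdef
  have hδ0 : 0 < δ := by positivity
  have hγL : ∀ y : ℝ, |y| ≤ δ → |γ y - xiInf| ≤ L * |y| := by
    intro y hy
    have hyt : y ∈ tγ := hδγ (by
      simp only [Metric.mem_ball, Real.dist_eq, sub_zero]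
      calc |y| ≤ δ := hy
        _ ≤ δγ / 2 := min_le_left _ _
        _ < δγ := by linarith)
    have h0t : (0 : ℝ) ∈ tγ := hδγ (by simp [Metric.mem_ball, hδγ0])
    have := hlipγ.dist_le_mul y hyt 0 h0t
    rw [Real.dist_eq, Real.dist_eq, sub_zero, hγ0] at this
    calc |γ y - xiInf| ≤ (Kγ : ℝ) * |y| := this
      _ ≤ L * |y| := by
        refine mul_le_mul_of_nonneg_right ?_ (abs_nonneg y)
        rw [hLdef]
        have : (Kγ : ℝ) ≤ ((max Kγ KΔ : NNReal) : ℝ) := by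
          exact_mod_cast le_max_left Kγ KΔ
        linarith
  have hΔL : ∀ x : ℝ, |x| ≤ δ → |Δ x - lam| ≤ L * |x| := by
    intro x hx
    have hxt : x ∈ tΔ := hδΔ (by
      simp only [Metric.mem_ball, Real.dist_eq, sub_zero]
      calc |x| ≤ δ := hx
        _ ≤ δΔ / 2 := min_le_right _ _
        _ < δΔ := by linarith)
    have h0t : (0 : ℝ) ∈ tΔ := hδΔ (by simp [Metric.mem_ball, hδΔ0])
    have := hlipΔ.dist_le_mul x hxt 0 h0t
    rw [Real.dist_eq, Real.dist_eq, sub_zero, hΔ0] at this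
    calc |Δ x - lam| ≤ (KΔ : ℝ) * |x| := this
      _ ≤ L * |x| := by
        refine mul_le_mul_of_nonneg_right ?_ (abs_nonneg x)
        rw [hLdef]
        have : (KΔ : ℝ) ≤ ((max Kγ KΔ : NNReal) : ℝ) := by
          exact_mod_cast le_max_right Kγ KΔ
        linarith
  set M : ℝ := |xiInf| + L * δ with hMdef
  have hM0 : 0 < M := by
    have : 0 < |xiInf| := abs_pos.mpr hxiInf
    have : 0 < L * δ := by positivity
    rw [hMdef]; positivity
  have hγM : ∀ y : ℝ, |y| ≤ δ → |γ y| ≤ M := by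
    intro y hy
    have h1 := hγL y hy
    have h2 : L * |y| ≤ L * δ := mul_le_mul_of_nonneg_left hy hL0.le
    have h3 : |γ y| ≤ |xiInf| + |γ y - xiInf| := by
      have := abs_sub_abs_le_abs_sub (γ y) xiInf; linarith
    rw [hMdef]; linarith
  set ε : ℝ := (1 - lam) / 2 with hεdef
  have hε0 : 0 < ε := by rw [hεdef]; linarith
  set μ : ℝ := (1 + lam) / 2 with hμdef
  have hμ0 : 0 < μ := by rw [hμdef]; linarith
  have hμ1 : μ < 1 := by rw [hμdef]; linarith
  have hlamμ : lam < μ := by rw [hμdef]; linarith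
  set r : ℝ := min δ (min (δ / M) (ε / (L * M))) with hrdef
  have hr0 : 0 < r := by
    rw [hrdef]
    refine lt_min hδ0 (lt_min (by positivity) (by positivity))
  -- eventual smallness
  have hev1 : ∀ᶠ n in Filter.atTop, |η n| ≤ r := by
    have := hηlim.eventually (Metric.closedBall_mem_nhds (0 : ℝ) hr0)
    filter_upwards [this] with n hn
    simpa [Metric.mem_closedBall, Real.dist_eq] using hn
  have hev2 : ∀ᶠ n : ℕ in Filter.atTop, (n : ℝ) * μ ^ n ≤ 1 := by
    exact (tendsto_self_mul_const_pow_of_lt_one hμ0.le hμ1).eventually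
      (eventually_le_nhds (by norm_num : (0:ℝ) < 1))
  have hev3 : ∀ᶠ n in Filter.atTop, 1 ≤ n := Filter.eventually_ge_atTop 1
  obtain ⟨n₀, hn₀⟩ := Filter.eventually_atTop.mp ((hev1.and hev2).and hev3)
  -- constants
  set K : ℝ := L * M * M with hKdef
  have hK0 : 0 < K := by rw [hKdef]; positivity
  set E : ℝ := Real.exp (K / lam) with hEdef
  have hE1 : 1 ≤ E := by
    rw [hEdef]; rw [Real.one_le_exp_iff]; positivity
  set C₁ : ℝ := M * E with hC₁def
  have hC₁0 : 0 < C₁ := by rw [hC₁def]; positivity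
  set K₂ : ℝ := L * M * C₁ with hK₂def
  have hK₂0 : 0 < K₂ := by rw [hK₂def]; positivity
  set E₂ : ℝ := Real.exp (K₂ / lam) with hE₂def
  have hE₂0 : 0 < E₂ := Real.exp_pos _
  set C : ℝ := L * C₁ + (K₂ * E₂ * M / lam + L * C₁) + 1 with hCdef
  have hC0 : 0 < C := by
    have h1 : 0 < L * C₁ := by positivity
    have h2 : 0 < K₂ * E₂ * M / lam := by positivity
    rw [hCdef]; linarith
  refine ⟨C, hC0, n₀, fun n hn => ?_⟩
  obtain ⟨⟨hηr, hnμ⟩, hn1⟩ := hn₀ n hn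
  set ξn : ℝ := γ (η n) with hξdef
  set xn : ℝ := ξn * η n with hxdef
  have hηδ : |η n| ≤ δ := hηr.trans (min_le_left _ _)
  have hηδM : |η n| ≤ δ / M := hηr.trans ((min_le_right _ _).trans (min_le_left _ _))
  have hηεLM : |η n| ≤ ε / (L * M) := hηr.trans ((min_le_right _ _).trans (min_le_right _ _))
  have hξM : |ξn| ≤ M := hγM _ hηδ
  have hxM : |xn| ≤ M * |η n| := by
    rw [hxdef, abs_mul]
    exact mul_le_mul_of_nonneg_right hξM (abs_nonneg _)
  have hxδ : |xn| ≤ δ := by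
    calc |xn| ≤ M * |η n| := hxM
      _ ≤ M * (δ / M) := mul_le_mul_of_nonneg_left hηδM hM0.le
      _ = δ := by field_simp
  have hΔref : |Δ xn - lam| ≤ L * M * |η n| := by
    calc |Δ xn - lam| ≤ L * |xn| := hΔL _ hxδ
      _ ≤ L * (M * |η n|) := mul_le_mul_of_nonneg_left hxM hL0.le
      _ = L * M * |η n| := by ring
  have hΔε : |Δ xn - lam| ≤ ε := by
    calc |Δ xn - lam| ≤ L * M * |η n| := hΔref
      _ ≤ L * M * (ε / (L * M)) := mul_le_mul_of_nonneg_left hηεLM (by positivity)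
      _ = ε := by field_simp
  have hΔμ : |Δ xn| ≤ μ := by
    have := abs_sub_abs_le_abs_sub (Δ xn) lam
    rw [abs_of_pos hlam0] at this
    rw [hμdef]; rw [hεdef] at hΔε; linarith
  have heq := hηeq n hn1
  have habs : |η n| = |Δ xn| ^ n * |ξn| := by
    rw [heq, abs_mul, abs_pow]
  -- crude bound
  have hcrude : |η n| ≤ M * μ ^ n := by
    rw [habs]
    calc |Δ xn| ^ n * |ξn| ≤ μ ^ n * M :=
          mul_le_mul (pow_le_pow_left₀ (abs_nonneg _) hΔμ n) hξM (abs_nonneg _)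
            (pow_nonneg hμ0.le n)
      _ = M * μ ^ n := by ring
  have hΔK : |Δ xn - lam| ≤ K * μ ^ n := by
    calc |Δ xn - lam| ≤ L * M * |η n| := hΔref
      _ ≤ L * M * (M * μ ^ n) := mul_le_mul_of_nonneg_left hcrude (by positivity)
      _ = K * μ ^ n := by rw [hKdef]; ring
  have hΔabs : |Δ xn| ≤ lam + K * μ ^ n := by
    have := abs_sub_abs_le_abs_sub (Δ xn) lam
    rw [abs_of_pos hlam0] at this; linarith
  -- refined power bound
  have hpow : |Δ xn| ^ n ≤ lam ^ n * E := by
    calc |Δ xn| ^ n ≤ (lam + K * μ ^ n) ^ n :=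
          pow_le_pow_left₀ (abs_nonneg _) hΔabs n
      _ ≤ lam ^ n * Real.exp (n * (K * μ ^ n / lam)) :=
          aux_exp_bound lam (K * μ ^ n) hlam0 (by positivity) n
      _ ≤ lam ^ n * E := by
          refine mul_le_mul_of_nonneg_left ?_ (pow_nonneg hlam0.le n)
          rw [hEdef]
          apply Real.exp_le_exp.mpr
          have : (n : ℝ) * (K * μ ^ n / lam) = ((n : ℝ) * μ ^ n) * (K / lam) := by ring
          rw [this]
          calc ((n : ℝ) * μ ^ n) * (K / lam) ≤ 1 * (K / lam) :=
                mul_le_mul_of_nonneg_right hnμ (by positivity)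
            _ = K / lam := one_mul _
  have hη1 : |η n| ≤ C₁ * lam ^ n := by
    rw [habs]
    calc |Δ xn| ^ n * |ξn| ≤ (lam ^ n * E) * M :=
          mul_le_mul hpow hξM (abs_nonneg _) (by positivity)
      _ = C₁ * lam ^ n := by rw [hC₁def]; ring
  -- Part 1
  have hpart1 : |ξn - xiInf| ≤ C * lam ^ n := by
    calc |ξn - xiInf| ≤ L * |η n| := hγL _ hηδ
      _ ≤ L * (C₁ * lam ^ n) := mul_le_mul_of_nonneg_left hη1 hL0.le
      _ = (L * C₁) * lam ^ n := by ring
      _ ≤ C * lam ^ n := by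
          refine mul_le_mul_of_nonneg_right ?_ (pow_nonneg hlam0.le n)
          have h2 : 0 < K₂ * E₂ * M / lam := by positivity
          have h3 : 0 < L * C₁ := by positivity
          rw [hCdef]; linarith
  refine ⟨hpart1, ?_⟩
  -- Part 2
  have hΔK2 : |Δ xn - lam| ≤ K₂ * lam ^ n := by
    calc |Δ xn - lam| ≤ L * M * |η n| := hΔref
      _ ≤ L * M * (C₁ * lam ^ n) := mul_le_mul_of_nonneg_left hη1 (by positivity)
      _ = K₂ * lam ^ n := by rw [hK₂def]; ring
  have hΔabs2 : |Δ xn| ≤ lam + K₂ * lam ^ n := by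
    have := abs_sub_abs_le_abs_sub (Δ xn) lam
    rw [abs_of_pos hlam0] at this; linarith
  have hlamle : lam ≤ lam + K₂ * lam ^ n := by
    have : 0 ≤ K₂ * lam ^ n := by positivity
    linarith
  have hnlam : (n : ℝ) * lam ^ n ≤ 1 := by
    calc (n : ℝ) * lam ^ n ≤ (n : ℝ) * μ ^ n :=
          mul_le_mul_of_nonneg_left (pow_le_pow_left₀ hlam0.le hlamμ.le n) (Nat.cast_nonneg n)
      _ ≤ 1 := hnμ
  -- bound on m^(n-1)
  obtain ⟨k, hk⟩ : ∃ k : ℕ, n = k + 1 := ⟨n - 1, by omega⟩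
  have hmk : (lam + K₂ * lam ^ n) ^ k ≤ lam ^ k * E₂ := by
    calc (lam + K₂ * lam ^ n) ^ k
        ≤ lam ^ k * Real.exp (k * (K₂ * lam ^ n / lam)) :=
          aux_exp_bound lam (K₂ * lam ^ n) hlam0 (by positivity) k
      _ ≤ lam ^ k * E₂ := by
          refine mul_le_mul_of_nonneg_left ?_ (pow_nonneg hlam0.le k)
          rw [hE₂def]
          apply Real.exp_le_exp.mpr
          have hkn : (k : ℝ) ≤ (n : ℝ) := by exact_mod_cast (by omega : k ≤ n)
          have h1 : (k : ℝ) * (K₂ * lam ^ n / lam) = ((k : ℝ) * lam ^ n) * (K₂ / lam) := by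
            ring
          rw [h1]
          have h2 : (k : ℝ) * lam ^ n ≤ 1 := by
            calc (k : ℝ) * lam ^ n ≤ (n : ℝ) * lam ^ n :=
                  mul_le_mul_of_nonneg_right hkn (by positivity)
              _ ≤ 1 := hnlam
          calc ((k : ℝ) * lam ^ n) * (K₂ / lam) ≤ 1 * (K₂ / lam) :=
                mul_le_mul_of_nonneg_right h2 (by positivity)
            _ = K₂ / lam := one_mul _
  have hpowdiff : |Δ xn ^ n - lam ^ n| ≤ (n : ℝ) * (lam ^ k * E₂) * (K₂ * lam ^ n) := by
    have h1 := aux_pow_sub (lam + K₂ * lam ^ n) k (Δ xn) lam hΔabs2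
      (by rw [abs_of_pos hlam0]; exact hlamle)
    rw [← hk] at h1
    have hkcast : ((k : ℝ) + 1) = (n : ℝ) := by
      rw [hk]; push_cast; ring
    rw [hkcast] at h1
    calc |Δ xn ^ n - lam ^ n| ≤ (n : ℝ) * (lam + K₂ * lam ^ n) ^ k * |Δ xn - lam| := h1
      _ ≤ (n : ℝ) * (lam ^ k * E₂) * (K₂ * lam ^ n) := by
          refine mul_le_mul (mul_le_mul_of_nonneg_left hmk (Nat.cast_nonneg n)) hΔK2
            (abs_nonneg _) ?_
          positivity
  have hsplit : η n - xiInf * lam ^ n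
      = (Δ xn ^ n - lam ^ n) * ξn + lam ^ n * (ξn - xiInf) := by
    rw [heq]; ring
  calc |η n - xiInf * lam ^ n|
      ≤ |Δ xn ^ n - lam ^ n| * |ξn| + lam ^ n * |ξn - xiInf| := by
        rw [hsplit]
        refine (abs_add_le _ _).trans ?_
        rw [abs_mul, abs_mul, abs_of_pos (pow_pos hlam0 n)]
    _ ≤ ((n : ℝ) * (lam ^ k * E₂) * (K₂ * lam ^ n)) * M
        + lam ^ n * ((L * C₁) * lam ^ n) := by
        refine add_le_add (mul_le_mul hpowdiff hξM (abs_nonneg _) (by positivity)) ?_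
        refine mul_le_mul_of_nonneg_left ?_ (by positivity)
        calc |ξn - xiInf| ≤ L * |η n| := hγL _ hηδ
          _ ≤ L * (C₁ * lam ^ n) := mul_le_mul_of_nonneg_left hη1 hL0.le
          _ = (L * C₁) * lam ^ n := by ring
    _ = (K₂ * E₂ * M / lam) * ((n : ℝ) * lam ^ (2 * n))
        + (L * C₁) * lam ^ (2 * n) := by
        have hlne : lam ≠ 0 := hlam0.ne'
        have h2 : lam ^ (2 * n) = lam ^ n * lam ^ n := by rw [two_mul, pow_add]
        have h1 : lam ^ k * lam = lam ^ n := by rw [hk, pow_succ]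
        rw [h2, ← h1]
        field_simp
    _ ≤ C * (n : ℝ) * lam ^ (2 * n) := by
        have hn1' : (1 : ℝ) ≤ (n : ℝ) := by exact_mod_cast hn1
        have hp : (0 : ℝ) ≤ lam ^ (2 * n) := by positivity
        have hb : (L * C₁) * lam ^ (2 * n) ≤ (L * C₁) * ((n : ℝ) * lam ^ (2 * n)) := by
          exact mul_le_mul_of_nonneg_left (le_mul_of_one_le_left hp hn1') (by positivity)
        have ha : (K₂ * E₂ * M / lam) * ((n : ℝ) * lam ^ (2 * n))
            + (L * C₁) * ((n : ℝ) * lam ^ (2 * n))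
            = (K₂ * E₂ * M / lam + L * C₁) * ((n : ℝ) * lam ^ (2 * n)) := by ring
        have hc : (K₂ * E₂ * M / lam + L * C₁) * ((n : ℝ) * lam ^ (2 * n))
            ≤ C * ((n : ℝ) * lam ^ (2 * n)) := by
          refine mul_le_mul_of_nonneg_right ?_ (by positivity)
          have h3 : 0 < L * C₁ := by positivity
          rw [hCdef]; linarith
        calc (K₂ * E₂ * M / lam) * ((n : ℝ) * lam ^ (2 * n))
            + (L * C₁) * lam ^ (2 * n)
            ≤ (K₂ * E₂ * M / lam) * ((n : ℝ) * lam ^ (2 * n))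
              + (L * C₁) * ((n : ℝ) * lam ^ (2 * n)) := add_le_add le_rfl hb
          _ ≤ C * ((n : ℝ) * lam ^ (2 * n)) := by rw [ha]; exact hc
          _ = C * (n : ℝ) * lam ^ (2 * n) := by ring
end

section
/- Let 0 < λ < 1 and let L : ℕ → ℕ → ℝ be a doubly-indexed family of real numbers such that L(q, p) = 0 whenever q > p, and such that |L(q, p)| ≤ C·Rᵖ for all p, q and some constants C, R > 0. Suppose there exists n₁ such that for every integer n ≥ n₁ the (absolutely convergent) double series Σ_{p=0}^{∞} Σ_{q=0}^{p} L(q, p)·n^q·λ^{n·p} equals 0. Then L(q, p) = 0 for all q ≤ p. -/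
open Filter Polynomial

private lemma summable_linear_geometric_aux (c x : ℝ) (hx : |x| < 1) :
    Summable (fun k : ℕ => ((k : ℝ) + c) * x ^ k) := by
  have h1 : Summable (fun k : ℕ => (k : ℝ) * x ^ k) := by
    simpa using summable_pow_mul_geometric_of_norm_lt_one 1 (r := x)
      (by simpa [Real.norm_eq_abs] using hx)
  have h2 : Summable (fun k : ℕ => c * x ^ k) := by
    refine Summable.mul_left c ?_
    exact summable_geometric_of_norm_lt_one (by simpa [Real.norm_eq_abs] using hx)
  simpa [add_mul] using h1.add h2

private lemma poly_eq_zero_of_tendsto_zero (P : Polynomial ℝ)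
    (h : Tendsto (fun n : ℕ => P.eval (n : ℝ)) atTop (nhds 0)) : P = 0 := by
  by_cases hdeg : 0 < P.degree
  · exfalso
    have h1 : Tendsto (fun x : ℝ => |P.eval x|) atTop atTop :=
      Polynomial.abs_tendsto_atTop P hdeg
    have h2 : Tendsto (fun n : ℕ => |P.eval (n : ℝ)|) atTop atTop :=
      h1.comp tendsto_natCast_atTop_atTop
    exact not_tendsto_nhds_of_tendsto_atTop h2 0 (by simpa using h.abs)
  · push_neg at hdeg
    set c := P.coeff 0 with hc
    have hPe : P = Polynomial.C c := Polynomial.degree_le_zero_iff.mp hdeg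
    have h' : Tendsto (fun _ : ℕ => c) atTop (nhds 0) := by
      rw [hPe] at h; simpa using h
    have ha : (0 : ℝ) = c := tendsto_nhds_unique h' tendsto_const_nhds
    rw [hPe, ← ha]; simp

/-- Uniqueness of coefficients: if a doubly-indexed family `L(q,p)` (vanishing for
`q > p`, with `|L(q,p)| ≤ C·Rᵖ`) satisfies
`Σ_{p≥0} Σ_{q=0}^{p} L(q,p)·n^q·λ^{np} = 0` for all large `n`, then all `L(q,p)`
with `q ≤ p` vanish. -/
theorem coefficients_vanish_of_series_vanish (lam : ℝ) (hlam0 : 0 < lam)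
    (hlam1 : lam < 1) (L : ℕ → ℕ → ℝ) (hLtri : ∀ q p : ℕ, p < q → L q p = 0)
    (C R : ℝ) (hC : 0 < C) (hR : 0 < R)
    (hbound : ∀ q p : ℕ, |L q p| ≤ C * R ^ p)
    (n₁ : ℕ) (hvanish : ∀ n : ℕ, n₁ ≤ n →
      ∑' p : ℕ, ∑ q ∈ Finset.range (p + 1), L q p * (n : ℝ) ^ q * lam ^ (n * p) = 0) :
    ∀ q p : ℕ, q ≤ p → L q p = 0 := by
  suffices key : ∀ p q : ℕ, L q p = 0 by exact fun q p _ => key p q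
  intro p
  induction p using Nat.strong_induction_on with
  | _ p₀ IH =>
  intro q
  rcases lt_or_ge p₀ q with hq | hq
  · exact hLtri q p₀ hq
  -- the polynomial of coefficients at level p₀
  set P : Polynomial ℝ :=
    ∑ j ∈ Finset.range (p₀ + 1), Polynomial.C (L j p₀) * Polynomial.X ^ j with hPdef
  have hcoeff : ∀ j, j ∈ Finset.range (p₀ + 1) → P.coeff j = L j p₀ := by
    intro j hj
    simp only [hPdef, Polynomial.finset_sum_coeff, Polynomial.coeff_C_mul,
      Polynomial.coeff_X_pow, mul_ite, mul_one, mul_zero]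
    rw [Finset.sum_ite_eq]
    simp [hj]
  have hPeval : ∀ y : ℝ, P.eval y = ∑ j ∈ Finset.range (p₀ + 1), L j p₀ * y ^ j := by
    intro y
    simp [hPdef, Polynomial.eval_finset_sum]
  -- the constant D
  have hDsum : Summable (fun k : ℕ => ((k : ℝ) + ((p₀ : ℝ) + 2)) * (1/2 : ℝ) ^ k) :=
    summable_linear_geometric_aux _ _ (by rw [abs_of_nonneg] <;> norm_num)
  set D := ∑' k : ℕ, ((k : ℝ) + ((p₀ : ℝ) + 2)) * (1/2 : ℝ) ^ k with hDdef
  set B := C * D * R ^ (p₀ + 1) with hBdef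
  -- main pointwise bound
  have hB : ∀ n : ℕ, n₁ ≤ n → 1 ≤ n → R * ((n : ℝ) * lam ^ n) ≤ 1/2 →
      |P.eval (n : ℝ)| ≤ B * ((n : ℝ) ^ (p₀ + 1) * lam ^ n) := by
    intro n hn₁ hn1 hxhalf
    set x := R * ((n : ℝ) * lam ^ n) with hxdef
    have hlamn : (0 : ℝ) < lam ^ n := pow_pos hlam0 n
    have hn0 : (0 : ℝ) < (n : ℝ) := by exact_mod_cast hn1
    have hx0 : 0 ≤ x := by positivity
    have hxlt : |x| < 1 := by
      rw [abs_of_nonneg hx0]; linarith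
    set a : ℕ → ℝ :=
      fun p => ∑ q ∈ Finset.range (p + 1), L q p * (n : ℝ) ^ q * lam ^ (n * p) with hadef
    -- termwise bound
    have habs : ∀ p : ℕ, |a p| ≤ ((p : ℝ) + 1) * x ^ p * C := by
      intro p
      have h1 : |a p| ≤ ∑ q ∈ Finset.range (p + 1), |L q p * (n : ℝ) ^ q * lam ^ (n * p)| :=
        Finset.abs_sum_le_sum_abs _ _
      have h2 : ∀ q ∈ Finset.range (p + 1),
          |L q p * (n : ℝ) ^ q * lam ^ (n * p)| ≤ C * R ^ p * (n : ℝ) ^ p * lam ^ (n * p) := by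
        intro q hqr
        have hq' : q ≤ p := Nat.lt_succ_iff.mp (Finset.mem_range.mp hqr)
        have hnq : (n : ℝ) ^ q ≤ (n : ℝ) ^ p := by
          apply pow_le_pow_right₀ (by exact_mod_cast hn1) hq'
        have hL : |L q p| ≤ C * R ^ p := hbound q p
        have hnpow : (0:ℝ) ≤ (n:ℝ) ^ q := by positivity
        have hlpow : (0:ℝ) < lam ^ (n * p) := pow_pos hlam0 _
        calc |L q p * (n : ℝ) ^ q * lam ^ (n * p)|
            = |L q p| * (n : ℝ) ^ q * lam ^ (n * p) := by
              rw [abs_mul, abs_mul, abs_of_nonneg hnpow, abs_of_pos hlpow]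
          _ ≤ (C * R ^ p) * (n : ℝ) ^ p * lam ^ (n * p) := by
              apply mul_le_mul_of_nonneg_right _ hlpow.le
              exact mul_le_mul hL hnq hnpow (by positivity)
      have h3 : |a p| ≤ ((p : ℝ) + 1) * (C * R ^ p * (n : ℝ) ^ p * lam ^ (n * p)) := by
        calc |a p| ≤ ∑ q ∈ Finset.range (p + 1), |L q p * (n : ℝ) ^ q * lam ^ (n * p)| := h1
          _ ≤ ∑ _q ∈ Finset.range (p + 1), C * R ^ p * (n : ℝ) ^ p * lam ^ (n * p) :=
              Finset.sum_le_sum h2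
          _ = ((p : ℝ) + 1) * (C * R ^ p * (n : ℝ) ^ p * lam ^ (n * p)) := by
              rw [Finset.sum_const, Finset.card_range]
              push_cast; ring
      have hxp : x ^ p = R ^ p * (n : ℝ) ^ p * lam ^ (n * p) := by
        rw [hxdef, mul_pow, mul_pow, pow_mul]
        ring
      calc |a p| ≤ ((p : ℝ) + 1) * (C * R ^ p * (n : ℝ) ^ p * lam ^ (n * p)) := h3
        _ = ((p : ℝ) + 1) * x ^ p * C := by rw [hxp]; ring
    -- summability
    have hgsum : Summable (fun p : ℕ => ((p : ℝ) + 1) * x ^ p * C) :=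
      (summable_linear_geometric_aux 1 x hxlt).mul_right C
    have hasum : Summable a :=
      Summable.of_norm_bounded hgsum (fun p => by
        simpa [Real.norm_eq_abs] using habs p)
    have hzero : ∑' p : ℕ, a p = 0 := hvanish n hn₁
    have hsplit := Summable.sum_add_tsum_nat_add (f := a) (p₀ + 1) hasum
    have hinit : ∑ i ∈ Finset.range (p₀ + 1), a i = a p₀ := by
      rw [Finset.sum_range_succ]
      have : ∑ i ∈ Finset.range p₀, a i = 0 := by
        apply Finset.sum_eq_zero
        intro i hi
        have hIH := IH i (Finset.mem_range.mp hi)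
        simp [hadef, hIH]
      rw [this, zero_add]
    have hkey : a p₀ = -∑' k : ℕ, a (k + (p₀ + 1)) := by
      rw [hzero, hinit] at hsplit
      linarith
    -- bound the tail
    have htermbound : ∀ k : ℕ,
        ‖a (k + (p₀ + 1))‖ ≤ (((k : ℝ) + ((p₀ : ℝ) + 2)) * (1/2 : ℝ) ^ k) * (x ^ (p₀ + 1) * C) := by
      intro k
      have h1 : |a (k + (p₀ + 1))| ≤ (((k : ℝ) + (p₀ + 1)) + 1) * x ^ (k + (p₀ + 1)) * C :=
        by simpa using habs (k + (p₀ + 1))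
      have hxk : x ^ (k + (p₀ + 1)) = x ^ k * x ^ (p₀ + 1) := by rw [pow_add]
      have hxk2 : x ^ k ≤ (1/2 : ℝ) ^ k := pow_le_pow_left₀ hx0 hxhalf k
      have hc : (0:ℝ) ≤ ((k : ℝ) + (p₀ + 1)) + 1 := by positivity
      calc ‖a (k + (p₀ + 1))‖ = |a (k + (p₀ + 1))| := rfl
        _ ≤ (((k : ℝ) + (p₀ + 1)) + 1) * x ^ (k + (p₀ + 1)) * C := h1
        _ = (((k : ℝ) + ((p₀ : ℝ) + 2)) * x ^ k) * (x ^ (p₀ + 1) * C) := by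
            rw [hxk]; push_cast; ring
        _ ≤ (((k : ℝ) + ((p₀ : ℝ) + 2)) * (1/2 : ℝ) ^ k) * (x ^ (p₀ + 1) * C) := by
            apply mul_le_mul_of_nonneg_right _ (by positivity)
            apply mul_le_mul_of_nonneg_left hxk2 (by positivity)
    have htailsum : Summable (fun k : ℕ => ‖a (k + (p₀ + 1))‖) := by
      apply Summable.of_nonneg_of_le (fun k => norm_nonneg _) htermbound
      exact hDsum.mul_right _
    have htail : |∑' k : ℕ, a (k + (p₀ + 1))| ≤ D * (x ^ (p₀ + 1) * C) := by
      calc |∑' k : ℕ, a (k + (p₀ + 1))| ≤ ∑' k : ℕ, ‖a (k + (p₀ + 1))‖ :=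
          norm_tsum_le_tsum_norm htailsum
        _ ≤ ∑' k : ℕ, (((k : ℝ) + ((p₀ : ℝ) + 2)) * (1/2 : ℝ) ^ k) * (x ^ (p₀ + 1) * C) :=
          Summable.tsum_le_tsum htermbound htailsum (hDsum.mul_right _)
        _ = D * (x ^ (p₀ + 1) * C) := by rw [tsum_mul_right]
    have hap0 : |a p₀| ≤ D * (x ^ (p₀ + 1) * C) := by
      rw [hkey, abs_neg]; exact htail
    -- rewrite a p₀ as eval * lam power
    have heval : a p₀ = P.eval (n : ℝ) * lam ^ (n * p₀) := by
      rw [hPeval, Finset.sum_mul, hadef]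
    have hlamnp : (0 : ℝ) < lam ^ (n * p₀) := pow_pos hlam0 _
    have hfinal : |P.eval (n : ℝ)| * lam ^ (n * p₀)
        ≤ B * ((n : ℝ) ^ (p₀ + 1) * lam ^ n) * lam ^ (n * p₀) := by
      have lhs_eq : |P.eval (n : ℝ)| * lam ^ (n * p₀) = |a p₀| := by
        rw [heval, abs_mul, abs_of_pos hlamnp]
      have rhs_eq : D * (x ^ (p₀ + 1) * C)
          = B * ((n : ℝ) ^ (p₀ + 1) * lam ^ n) * lam ^ (n * p₀) := by
        have hxp : x ^ (p₀ + 1)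
            = R ^ (p₀ + 1) * ((n : ℝ) ^ (p₀ + 1) * (lam ^ n * lam ^ (n * p₀))) := by
          rw [hxdef, mul_pow, mul_pow]
          have : (lam ^ n) ^ (p₀ + 1) = lam ^ n * lam ^ (n * p₀) := by
            rw [← pow_mul, ← pow_add]
            ring_nf
          rw [this]
        rw [hxp, hBdef]; ring
      rw [lhs_eq, ← rhs_eq]
      exact hap0
    exact le_of_mul_le_mul_right (by simpa using hfinal) hlamnp
  -- eventual bound and squeeze
  have hx_ev : ∀ᶠ n : ℕ in atTop, R * ((n : ℝ) * lam ^ n) ≤ 1/2 := by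
    have t0 : Tendsto (fun n : ℕ => (n : ℝ) * lam ^ n) atTop (nhds 0) := by
      simpa using tendsto_pow_const_mul_const_pow_of_lt_one 1 hlam0.le hlam1
    have t1 : Tendsto (fun n : ℕ => R * ((n : ℝ) * lam ^ n)) atTop (nhds 0) := by
      simpa using t0.const_mul R
    exact (t1.eventually_lt_const (by norm_num : (0:ℝ) < 1/2)).mono fun n h => h.le
  have hev : ∀ᶠ n : ℕ in atTop, |P.eval (n : ℝ)| ≤ B * ((n : ℝ) ^ (p₀ + 1) * lam ^ n) := by
    filter_upwards [eventually_ge_atTop n₁, eventually_ge_atTop 1, hx_ev] with n h1 h2 h3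
    exact hB n h1 h2 h3
  have hlim : Tendsto (fun n : ℕ => B * ((n : ℝ) ^ (p₀ + 1) * lam ^ n)) atTop (nhds 0) := by
    simpa using (tendsto_pow_const_mul_const_pow_of_lt_one (p₀ + 1) hlam0.le hlam1).const_mul B
  have habs0 : Tendsto (fun n : ℕ => |P.eval (n : ℝ)|) atTop (nhds 0) :=
    squeeze_zero' (Eventually.of_forall fun n => abs_nonneg _) hev hlim
  have ht : Tendsto (fun n : ℕ => P.eval (n : ℝ)) atTop (nhds 0) := by
    rw [tendsto_zero_iff_norm_tendsto_zero]
    simpa [Real.norm_eq_abs] using habs0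
  have hP0 : P = 0 := poly_eq_zero_of_tendsto_zero P ht
  have := hcoeff q (Finset.mem_range.mpr (Nat.lt_succ_of_le hq))
  rw [hP0] at this
  simpa using this.symm
end
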